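/- Let D : ℝ^{d×N} → ℝ^{d×N} be C¹ with symmetric derivative tensor A and uniformly h-monotone. Then D is injective, its range D(ℝ^{d×N}) is an open subset of ℝ^{d×N}, and the convex conjugate F* of the potential F(T) := ∫₀¹ D(tT)·T dt is differentiable at every point of D(ℝ^{d×N}) with gradient ∂F*(B)/∂B = D^{-1}(B); equivalently, the gradient of F* at D(T) equals T for every T ∈ ℝ^{d×N}. -/

import Mathlib

open MeasureTheory Filter Topology Set

set_option maxHeartbeats 1000000

noncomputable section

/-- The space of real `d × N` matrices with the Frobenius (Euclidean) inner ℝ product. -/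
abbrev Mat (d N : ℕ) := EuclideanSpace ℝ (Fin d × Fin N)

/-- The potential `F(T) := ∫₀¹ D(tT)·T dt` of a mapping `D : ℝ^{d×N} → ℝ^{d×N}`. -/
noncomputable def pot (d N : ℕ) (D : Mat d N → Mat d N) (T : Mat d N) : ℝ :=
  ∫ t in (0 : ℝ)..1, (inner ℝ (D (t • T)) T : ℝ)

/-- The convex conjugate `F*(B) = sup_T (B·T − F(T))` as a real number (on the range of
`D` the supremum is attained, hence finite, so the real-valued `sSup` is the honest
conjugate there). -/
noncomputable def conjR (d N : ℕ) (D : Mat d N → Mat d N) (B : Mat d N) : ℝ :=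
  sSup (Set.range fun T : Mat d N => (inner ℝ B T : ℝ) - pot d N D T)

section Aux

variable {d N : ℕ} {D : Mat d N → Mat d N} {h : ℝ → ℝ}

/-- Derivative of `t ↦ ⟨D (c + t • v), w⟩`. -/
lemma hasDerivAt_inner_D (hD : ContDiff ℝ 1 D) (c v w : Mat d N) (t : ℝ) :
    HasDerivAt (fun t : ℝ => (inner ℝ (D (c + t • v)) w : ℝ))
      (inner ℝ (fderiv ℝ D (c + t • v) v) w : ℝ) t := by
  have h1 : HasDerivAt (fun t : ℝ => c + t • v) v t := by
    simpa using ((hasDerivAt_id t).smul_const v).const_add c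
  have h2 : HasDerivAt (fun t : ℝ => D (c + t • v)) (fderiv ℝ D (c + t • v) v) t :=
    (hD.differentiable one_ne_zero (c + t • v)).hasFDerivAt.comp_hasDerivAt t h1
  simpa using h2.inner ℝ (hasDerivAt_const t w)

lemma cont_inner_fderiv (hD : ContDiff ℝ 1 D) (c v w : Mat d N) :
    Continuous (fun t : ℝ => (inner ℝ (fderiv ℝ D (c + t • v) v) w : ℝ)) := by
  have hline : Continuous (fun t : ℝ => c + t • v) :=
    continuous_const.add (continuous_id.smul continuous_const)
  exact ((((hD.continuous_fderiv one_ne_zero).comp hline).clm_apply continuous_const).inner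
    continuous_const)

/-- Strong monotonicity along a segment. -/
lemma mono_seg (hD : ContDiff ℝ 1 D)
    (hanti : AntitoneOn h (Set.Ici 0))
    (hmon : ∀ T B : Mat d N, h ‖T‖ * ‖B‖ ^ 2 ≤ (inner ℝ (fderiv ℝ D T B) B : ℝ))
    (T Δ : Mat d N) (R : ℝ) (hT : ‖T‖ ≤ R) (hTΔ : ‖T + Δ‖ ≤ R) :
    h R * ‖Δ‖ ^ 2 ≤ (inner ℝ (D (T + Δ) - D T) Δ : ℝ) := by
  have hg : ∀ t : ℝ, HasDerivAt (fun t : ℝ => (inner ℝ (D (T + t • Δ)) Δ : ℝ))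
      (inner ℝ (fderiv ℝ D (T + t • Δ) Δ) Δ : ℝ) t := fun t => hasDerivAt_inner_D hD T Δ Δ t
  have hint : IntervalIntegrable (fun t : ℝ => (inner ℝ (fderiv ℝ D (T + t • Δ) Δ) Δ : ℝ))
      volume 0 1 := (cont_inner_fderiv hD T Δ Δ).intervalIntegrable 0 1
  have hftc : (∫ t in (0:ℝ)..1, (inner ℝ (fderiv ℝ D (T + t • Δ) Δ) Δ : ℝ))
      = (inner ℝ (D (T + (1:ℝ) • Δ)) Δ : ℝ) - (inner ℝ (D (T + (0:ℝ) • Δ)) Δ : ℝ) :=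
    intervalIntegral.integral_eq_sub_of_hasDerivAt (fun t _ => hg t) hint
  have hnorm : ∀ t ∈ Set.Icc (0:ℝ) 1, ‖T + t • Δ‖ ≤ R := by
    intro t ht
    have : T + t • Δ = (1 - t) • T + t • (T + Δ) := by module
    rw [this]
    calc ‖(1 - t) • T + t • (T + Δ)‖ ≤ ‖(1 - t) • T‖ + ‖t • (T + Δ)‖ := norm_add_le _ _
      _ = (1 - t) * ‖T‖ + t * ‖T + Δ‖ := by
          rw [norm_smul, norm_smul, Real.norm_eq_abs, Real.norm_eq_abs,
            abs_of_nonneg (by linarith [ht.2]), abs_of_nonneg ht.1]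
      _ ≤ (1 - t) * R + t * R := by
          have h0 : (0:ℝ) ≤ 1 - t := by linarith [ht.2]
          have hn : (0:ℝ) ≤ ‖T + Δ‖ := norm_nonneg _
          nlinarith [norm_nonneg T, ht.1]
      _ = R := by ring
  have hmono : ∀ t ∈ Set.Icc (0:ℝ) 1,
      h R * ‖Δ‖ ^ 2 ≤ (inner ℝ (fderiv ℝ D (T + t • Δ) Δ) Δ : ℝ) := by
    intro t ht
    have h1 : h R ≤ h ‖T + t • Δ‖ :=
      hanti (norm_nonneg _) (le_trans (norm_nonneg _) (hnorm t ht)) (hnorm t ht)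
    calc h R * ‖Δ‖ ^ 2 ≤ h ‖T + t • Δ‖ * ‖Δ‖ ^ 2 := by nlinarith [sq_nonneg ‖Δ‖]
      _ ≤ _ := hmon _ _
  have hci : (∫ _t in (0:ℝ)..1, h R * ‖Δ‖ ^ 2) = h R * ‖Δ‖ ^ 2 := by simp
  have hle : (∫ _t in (0:ℝ)..1, h R * ‖Δ‖ ^ 2)
      ≤ ∫ t in (0:ℝ)..1, (inner ℝ (fderiv ℝ D (T + t • Δ) Δ) Δ : ℝ) :=
    intervalIntegral.integral_mono_on zero_le_one (intervalIntegrable_const) hint hmono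
  rw [hci, hftc] at hle
  simpa [inner_sub_left] using hle

/-- Derivative of the potential along a line, assuming symmetry of the derivative. -/
lemma pot_line (hD : ContDiff ℝ 1 D)
    (hsymm : ∀ T B C : Mat d N,
      (inner ℝ (fderiv ℝ D T B) C : ℝ) = (inner ℝ (fderiv ℝ D T C) B : ℝ))
    (Y Δ : Mat d N) (s₀ : ℝ) :
    HasDerivAt (fun s : ℝ => pot d N D (Y + s • Δ)) (inner ℝ (D (Y + s₀ • Δ)) Δ : ℝ) s₀ := by
  set G : ℝ → ℝ → ℝ := fun s t => (inner ℝ (D (t • (Y + s • Δ))) (Y + s • Δ) : ℝ) with hG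
  set G' : ℝ → ℝ → ℝ := fun s t =>
    (inner ℝ (D (t • (Y + s • Δ))) Δ : ℝ)
      + (inner ℝ (fderiv ℝ D (t • (Y + s • Δ)) (t • Δ)) (Y + s • Δ) : ℝ) with hG'
  have hlineC : Continuous (fun p : ℝ × ℝ => p.2 • (Y + p.1 • Δ)) :=
    continuous_snd.smul (continuous_const.add (continuous_fst.smul continuous_const))
  have hYsC : Continuous (fun p : ℝ × ℝ => Y + p.1 • Δ) :=
    continuous_const.add (continuous_fst.smul continuous_const)
  have hG'c : Continuous (fun p : ℝ × ℝ => G' p.1 p.2) := by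
    apply Continuous.add
    · exact ((hD.continuous.comp hlineC)).inner continuous_const
    · exact ((((hD.continuous_fderiv one_ne_zero).comp hlineC).clm_apply
        (continuous_snd.smul continuous_const)).inner hYsC)
  obtain ⟨C, hC⟩ := (IsCompact.prod (isCompact_Icc (a := s₀ - 1) (b := s₀ + 1))
      (isCompact_Icc (a := (0:ℝ)) (b := 1))).exists_bound_of_continuousOn hG'c.continuousOn
  have hdiff : ∀ t : ℝ, ∀ s : ℝ, HasDerivAt (fun s => G s t) (G' s t) s := by
    intro t s
    have h1 : HasDerivAt (fun s : ℝ => Y + s • Δ) Δ s := by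
      simpa using ((hasDerivAt_id s).smul_const Δ).const_add Y
    have h2 : HasDerivAt (fun s : ℝ => t • (Y + s • Δ)) (t • Δ) s := by
      have : (fun s : ℝ => t • (Y + s • Δ)) = (fun s : ℝ => t • Y + s • (t • Δ)) := by
        funext s; module
      rw [this]
      simpa using ((hasDerivAt_id s).smul_const (t • Δ)).const_add (t • Y)
    have h3 : HasDerivAt (fun s : ℝ => D (t • (Y + s • Δ)))
        (fderiv ℝ D (t • (Y + s • Δ)) (t • Δ)) s :=
      (hD.differentiable one_ne_zero _).hasFDerivAt.comp_hasDerivAt s h2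
    exact h3.inner ℝ h1
  have key := intervalIntegral.hasDerivAt_integral_of_dominated_loc_of_deriv_le
    (F := G) (F' := G') (x₀ := s₀) (a := 0) (b := 1) (μ := volume)
    (bound := fun _ => C) (s := Metric.ball s₀ 1) (Metric.ball_mem_nhds s₀ zero_lt_one)
    (Filter.Eventually.of_forall (fun s =>
      ((hD.continuous.comp (continuous_id.smul continuous_const)).inner
        continuous_const).aestronglyMeasurable))
    (((hD.continuous.comp (continuous_id.smul continuous_const)).inner
        continuous_const).intervalIntegrable 0 1)
    (hG'c.comp (Continuous.prodMk_right s₀) |>.aestronglyMeasurable)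
    (Filter.Eventually.of_forall (fun t ht s hs => by
      have hmem : (s, t) ∈ Set.Icc (s₀ - 1) (s₀ + 1) ×ˢ Set.Icc (0:ℝ) 1 := by
        constructor
        · have := Metric.mem_ball.mp hs
          rw [Real.dist_eq] at this
          constructor <;> [linarith [abs_lt.mp this |>.1]; linarith [abs_lt.mp this |>.2]]
        · exact ⟨le_of_lt (Set.mem_Ioc.mp (by simpa [Set.uIoc_of_le] using ht)).1,
            (Set.mem_Ioc.mp (by simpa [Set.uIoc_of_le] using ht)).2⟩
      simpa using hC (s, t) hmem))
    (intervalIntegrable_const)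
    (Filter.Eventually.of_forall (fun t _ s _ => hdiff t s))
  obtain ⟨_, hkey⟩ := key
  set X := Y + s₀ • Δ with hX
  have hGid : (fun s : ℝ => pot d N D (Y + s • Δ)) = fun s => ∫ t in (0:ℝ)..1, G s t := rfl
  rw [hGid]
  refine hkey.congr_deriv ?_
  have hφ : ∀ t : ℝ, HasDerivAt (fun t : ℝ => t * (inner ℝ (D (t • X)) Δ : ℝ))
      ((inner ℝ (D (t • X)) Δ : ℝ) + t * (inner ℝ (fderiv ℝ D (t • X) X) Δ : ℝ)) t := by
    intro t
    have hin : HasDerivAt (fun t : ℝ => (inner ℝ (D (t • X)) Δ : ℝ))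
        (inner ℝ (fderiv ℝ D (t • X) X) Δ : ℝ) t := by
      simpa using hasDerivAt_inner_D hD 0 X Δ t
    have := (hasDerivAt_id' t).smul hin
    simp [mul_comm, add_comm] at this
    exact this
  have hcont : Continuous (fun t : ℝ => (inner ℝ (D (t • X)) Δ : ℝ)
      + t * (inner ℝ (fderiv ℝ D (t • X) X) Δ : ℝ)) := by
    apply Continuous.add
    · exact (hD.continuous.comp (continuous_id.smul continuous_const)).inner continuous_const
    · exact continuous_id.mul ((((hD.continuous_fderiv one_ne_zero).comp
        (continuous_id.smul continuous_const)).clm_apply continuous_const).inner continuous_const)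
  have hftc : (∫ t in (0:ℝ)..1, ((inner ℝ (D (t • X)) Δ : ℝ)
        + t * (inner ℝ (fderiv ℝ D (t • X) X) Δ : ℝ)))
      = (1:ℝ) * (inner ℝ (D ((1:ℝ) • X)) Δ : ℝ) - (0:ℝ) * (inner ℝ (D ((0:ℝ) • X)) Δ : ℝ) :=
    intervalIntegral.integral_eq_sub_of_hasDerivAt (fun t _ => hφ t)
      (hcont.intervalIntegrable 0 1)
  have heq : ∀ t : ℝ, G' s₀ t = (inner ℝ (D (t • X)) Δ : ℝ)
      + t * (inner ℝ (fderiv ℝ D (t • X) X) Δ : ℝ) := by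
    intro t
    simp only [hG', ← hX]
    congr 1
    rw [ContinuousLinearMap.map_smul, real_inner_smul_left, hsymm]
  rw [show (∫ t in (0:ℝ)..1, G' s₀ t) = ∫ t in (0:ℝ)..1, ((inner ℝ (D (t • X)) Δ : ℝ)
        + t * (inner ℝ (fderiv ℝ D (t • X) X) Δ : ℝ)) from
    intervalIntegral.integral_congr (fun t _ => heq t), hftc]
  simp

/-- Fundamental theorem: difference of potentials as a line integral. -/
lemma pot_diff (hD : ContDiff ℝ 1 D)
    (hsymm : ∀ T B C : Mat d N,
      (inner ℝ (fderiv ℝ D T B) C : ℝ) = (inner ℝ (fderiv ℝ D T C) B : ℝ))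
    (T Δ : Mat d N) :
    pot d N D (T + Δ) - pot d N D T = ∫ s in (0:ℝ)..1, (inner ℝ (D (T + s • Δ)) Δ : ℝ) := by
  have hcont : Continuous (fun s : ℝ => (inner ℝ (D (T + s • Δ)) Δ : ℝ)) :=
    (hD.continuous.comp (continuous_const.add (continuous_id.smul continuous_const))).inner
      continuous_const
  have := intervalIntegral.integral_eq_sub_of_hasDerivAt
    (f := fun s : ℝ => pot d N D (T + s • Δ))
    (f' := fun s : ℝ => (inner ℝ (D (T + s • Δ)) Δ : ℝ))
    (fun s _ => pot_line hD hsymm T Δ s) (hcont.intervalIntegrable 0 1)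
  rw [this]
  simp

/-- Convexity (gradient) inequality for the potential. -/
lemma pot_grad_ineq (hD : ContDiff ℝ 1 D)
    (hsymm : ∀ T B C : Mat d N,
      (inner ℝ (fderiv ℝ D T B) C : ℝ) = (inner ℝ (fderiv ℝ D T C) B : ℝ))
    (hpos : ∀ s : ℝ, 0 ≤ s → 0 < h s)
    (hanti : AntitoneOn h (Set.Ici 0))
    (hmon : ∀ T B : Mat d N, h ‖T‖ * ‖B‖ ^ 2 ≤ (inner ℝ (fderiv ℝ D T B) B : ℝ))
    (T S : Mat d N) :
    (inner ℝ (D T) (S - T) : ℝ) ≤ pot d N D S - pot d N D T := by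
  set Δ := S - T with hΔ
  have hS : S = T + Δ := by rw [hΔ]; abel
  rw [hS, pot_diff hD hsymm T Δ]
  have hcont : Continuous (fun s : ℝ => (inner ℝ (D (T + s • Δ)) Δ : ℝ)) :=
    (hD.continuous.comp (continuous_const.add (continuous_id.smul continuous_const))).inner
      continuous_const
  have hptwise : ∀ s ∈ Set.Icc (0:ℝ) 1,
      (inner ℝ (D T) Δ : ℝ) ≤ (inner ℝ (D (T + s • Δ)) Δ : ℝ) := by
    intro s hs
    rcases eq_or_lt_of_le hs.1 with hs0 | hs0
    · simp [← hs0]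
    · have hm := mono_seg hD hanti hmon T (s • Δ) (‖T‖ + ‖s • Δ‖) (by linarith [norm_nonneg (s • Δ)])
        (norm_add_le _ _)
      have h0 : (0:ℝ) ≤ (inner ℝ (D (T + s • Δ) - D T) (s • Δ) : ℝ) := by
        have : 0 ≤ h (‖T‖ + ‖s • Δ‖) * ‖s • Δ‖ ^ 2 := by
          have := hpos (‖T‖ + ‖s • Δ‖) (by positivity)
          positivity
        linarith
      rw [inner_smul_right, inner_sub_left] at h0
      nlinarith
  have hle : (∫ _s in (0:ℝ)..1, (inner ℝ (D T) Δ : ℝ))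
      ≤ ∫ s in (0:ℝ)..1, (inner ℝ (D (T + s • Δ)) Δ : ℝ) :=
    intervalIntegral.integral_mono_on zero_le_one intervalIntegrable_const
      (hcont.intervalIntegrable 0 1) hptwise
  simpa using hle

/-- The supremum defining `conjR` is attained at `T` for `B = D T`. -/
lemma conjR_eq (hD : ContDiff ℝ 1 D)
    (hsymm : ∀ T B C : Mat d N,
      (inner ℝ (fderiv ℝ D T B) C : ℝ) = (inner ℝ (fderiv ℝ D T C) B : ℝ))
    (hpos : ∀ s : ℝ, 0 ≤ s → 0 < h s)
    (hanti : AntitoneOn h (Set.Ici 0))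
    (hmon : ∀ T B : Mat d N, h ‖T‖ * ‖B‖ ^ 2 ≤ (inner ℝ (fderiv ℝ D T B) B : ℝ))
    (T : Mat d N) :
    conjR d N D (D T) = (inner ℝ (D T) T : ℝ) - pot d N D T := by
  have hub : ∀ x ∈ Set.range (fun S : Mat d N => (inner ℝ (D T) S : ℝ) - pot d N D S),
      x ≤ (inner ℝ (D T) T : ℝ) - pot d N D T := by
    rintro x ⟨S, rfl⟩
    have := pot_grad_ineq hD hsymm hpos hanti hmon T S
    rw [inner_sub_right] at this
    dsimp only
    linarith
  refine le_antisymm (csSup_le (Set.range_nonempty _) hub)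
    (le_csSup ⟨(inner ℝ (D T) T : ℝ) - pot d N D T, fun x hx => hub x hx⟩ ⟨T, rfl⟩)

lemma conjR_ge (hD : ContDiff ℝ 1 D)
    (hsymm : ∀ T B C : Mat d N,
      (inner ℝ (fderiv ℝ D T B) C : ℝ) = (inner ℝ (fderiv ℝ D T C) B : ℝ))
    (hpos : ∀ s : ℝ, 0 ≤ s → 0 < h s)
    (hanti : AntitoneOn h (Set.Ici 0))
    (hmon : ∀ T B : Mat d N, h ‖T‖ * ‖B‖ ^ 2 ≤ (inner ℝ (fderiv ℝ D T B) B : ℝ))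
    (S T : Mat d N) :
    (inner ℝ (D S) T : ℝ) - pot d N D T ≤ conjR d N D (D S) := by
  have hub : ∀ x ∈ Set.range (fun S' : Mat d N => (inner ℝ (D S) S' : ℝ) - pot d N D S'),
      x ≤ (inner ℝ (D S) S : ℝ) - pot d N D S := by
    rintro x ⟨S', rfl⟩
    have := pot_grad_ineq hD hsymm hpos hanti hmon S S'
    rw [inner_sub_right] at this
    dsimp only
    linarith
  exact le_csSup ⟨(inner ℝ (D S) S : ℝ) - pot d N D S, fun x hx => hub x hx⟩ ⟨T, rfl⟩

end Aux

/-- Let `D : ℝ^{d×N} → ℝ^{d×N}` be `C¹` with symmetric derivative tensor and uniformly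
`h`-monotone. Then `D` is injective, its range is open, and the convex conjugate `F*` of
the potential `F(T) := ∫₀¹ D(tT)·T dt` is differentiable at every point of the range of
`D`, with gradient `∂F*/∂B = D⁻¹(B)`; equivalently the gradient of `F*` at `D(T)` is `T`. -/
theorem conjugate_differentiable_on_range (d N : ℕ) (hd : 1 ≤ d) (hN : 1 ≤ N)
    (D : Mat d N → Mat d N) (hD : ContDiff ℝ 1 D)
    (hsymm : ∀ T B C : Mat d N,
      (inner ℝ (fderiv ℝ D T B) C : ℝ) = (inner ℝ (fderiv ℝ D T C) B : ℝ))
    (h : ℝ → ℝ)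
    (hpos : ∀ s : ℝ, 0 ≤ s → 0 < h s)
    (hanti : AntitoneOn h (Set.Ici 0))
    (hcont : ContinuousOn h (Set.Ici 0))
    (hmon : ∀ T B : Mat d N, h ‖T‖ * ‖B‖ ^ 2 ≤ (inner ℝ (fderiv ℝ D T B) B : ℝ)) :
    Function.Injective D ∧ IsOpen (Set.range D) ∧
      ∀ T : Mat d N, HasGradientAt (conjR d N D) T (D T) := by
  -- Injectivity
  have hinj : Function.Injective D := by
    intro S T hST
    by_contra hne
    have hm := mono_seg hD hanti hmon S (T - S) (max ‖S‖ ‖T‖) (le_max_left _ _)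
      (by rw [add_sub_cancel]; exact le_max_right _ _)
    rw [add_sub_cancel, hST, sub_self] at hm
    simp only [inner_zero_left] at hm
    have h1 : 0 < h (max ‖S‖ ‖T‖) := hpos _ (le_trans (norm_nonneg S) (le_max_left _ _))
    have h2 : (0:ℝ) < ‖T - S‖ ^ 2 := by
      have hts : T - S ≠ 0 := sub_ne_zero.mpr (Ne.symm hne)
      exact pow_pos (norm_pos_iff.mpr hts) 2
    nlinarith
  have hopen : IsOpen (Set.range D) := by
    have hmapnhds : ∀ T : Mat d N, Filter.map D (𝓝 T) = 𝓝 (D T) := by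
      intro T
      have hstrict : HasStrictFDerivAt D (fderiv ℝ D T) T := hD.hasStrictFDerivAt one_ne_zero
      have hinj' : Function.Injective (fderiv ℝ D T) := by
        intro B B' hBB
        by_contra hne
        have h2 : fderiv ℝ D T (B - B') = 0 := by rw [map_sub, hBB, sub_self]
        have := hmon T (B - B')
        rw [h2] at this
        simp only [inner_zero_left] at this
        have h1 : 0 < h ‖T‖ := hpos _ (norm_nonneg _)
        have h3 : (0:ℝ) < ‖B - B'‖ ^ 2 := by
          exact pow_pos (norm_pos_iff.mpr (sub_ne_zero.mpr hne)) 2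
        nlinarith
      have hsurj : LinearMap.range (fderiv ℝ D T : Mat d N →ₗ[ℝ] Mat d N) = ⊤ := by
        rw [LinearMap.range_eq_top]
        exact LinearMap.injective_iff_surjective.mp hinj'
      exact hstrict.map_nhds_eq_of_surj hsurj
    rw [isOpen_iff_mem_nhds]
    rintro B ⟨T, rfl⟩
    rw [← hmapnhds T, Filter.mem_map]
    simp
  refine ⟨hinj, hopen, ?_⟩
  -- Gradient of the conjugate
  intro T₀
  set B₀ := D T₀ with hB₀
  set c₁ := h (‖T₀‖ + 1) with hc₁
  have hc₁pos : 0 < c₁ := hpos _ (by positivity)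
  -- quantitative inverse bound
  have hkey : ∀ S : Mat d N, ‖D S - B₀‖ < c₁ →
      ‖S - T₀‖ ≤ ‖D S - B₀‖ / c₁ := by
    intro S hS
    have hdist : ‖S - T₀‖ ≤ 1 := by
      by_contra hr
      push_neg at hr
      set r := ‖S - T₀‖ with hrdef
      have hr0 : (0:ℝ) < r := by linarith
      set u := r⁻¹ • (S - T₀) with hu
      have hnu : ‖u‖ = 1 := by
        rw [hu, norm_smul, Real.norm_eq_abs, abs_of_pos (inv_pos.mpr hr0), ← hrdef,
          inv_mul_cancel₀ (ne_of_gt hr0)]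
      have hru : r • u = S - T₀ := by
        rw [hu, smul_smul, mul_inv_cancel₀ (ne_of_gt hr0), one_smul]
      -- step 1
      have hA1 : c₁ * 1 ≤ (inner ℝ (D (T₀ + u) - D T₀) u : ℝ) := by
        have := mono_seg hD hanti hmon T₀ u (‖T₀‖ + 1) (by linarith)
          (le_trans (norm_add_le _ _) (by rw [hnu]))
        rw [hnu] at this
        simpa using this
      -- step 2
      have hA2 : (0:ℝ) ≤ (inner ℝ (D S - D (T₀ + u)) u : ℝ) := by
        have hS₂ : T₀ + u + (r - 1) • u = S := by
          rw [show (r - 1) • u = r • u - u by rw [sub_smul, one_smul]]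
          rw [hru]; abel
        have hm := mono_seg hD hanti hmon (T₀ + u) ((r - 1) • u) (‖T₀‖ + r)
          (le_trans (norm_add_le _ _) (by rw [hnu]; linarith))
          (by rw [hS₂]
              calc ‖S‖ = ‖T₀ + (S - T₀)‖ := by rw [add_sub_cancel]
                _ ≤ ‖T₀‖ + ‖S - T₀‖ := norm_add_le _ _
                _ = ‖T₀‖ + r := by rw [hrdef])
        rw [hS₂] at hm
        have h0 : (0:ℝ) ≤ h (‖T₀‖ + r) * ‖(r - 1) • u‖ ^ 2 := by
          have := hpos (‖T₀‖ + r) (by positivity)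
          positivity
        have h1 : (0:ℝ) ≤ (inner ℝ (D S - D (T₀ + u)) ((r - 1) • u) : ℝ) := le_trans h0 hm
        rw [inner_smul_right] at h1
        nlinarith
      have hsum : c₁ ≤ (inner ℝ (D S - D T₀) u : ℝ) := by
        have : (inner ℝ (D S - D T₀) u : ℝ)
            = (inner ℝ (D S - D (T₀ + u)) u : ℝ) + (inner ℝ (D (T₀ + u) - D T₀) u : ℝ) := by
          rw [← inner_add_left]; congr 1; abel
        rw [this]; linarith
      have hcs : (inner ℝ (D S - D T₀) u : ℝ) ≤ ‖D S - D T₀‖ * ‖u‖ := real_inner_le_norm _ _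
      rw [hnu, mul_one] at hcs
      rw [← hB₀] at hcs
      linarith
    -- now strong monotonicity on the unit ball
    have hm := mono_seg hD hanti hmon T₀ (S - T₀) (‖T₀‖ + 1) (by linarith)
      (by rw [add_sub_cancel]
          calc ‖S‖ = ‖T₀ + (S - T₀)‖ := by rw [add_sub_cancel]
            _ ≤ ‖T₀‖ + ‖S - T₀‖ := norm_add_le _ _
            _ ≤ ‖T₀‖ + 1 := by linarith)
    rw [add_sub_cancel, ← hB₀] at hm
    have hcs : (inner ℝ (D S - B₀) (S - T₀) : ℝ) ≤ ‖D S - B₀‖ * ‖S - T₀‖ :=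
      real_inner_le_norm _ _
    rcases eq_or_lt_of_le (norm_nonneg (S - T₀)) with h0 | h0
    · rw [← h0]; positivity
    · rw [← hc₁] at hm
      rw [le_div_iff₀ hc₁pos]
      nlinarith [hm, hcs, h0]
  -- eventual bound and littleO
  rw [hasGradientAt_iff_isLittleO]
  rw [Asymptotics.isLittleO_iff]
  intro ε hε
  have hopen : IsOpen (Set.range D) := by
    -- reprove locally (could refactor); use the same argument
    have hopen' : ∀ T : Mat d N, Filter.map D (𝓝 T) = 𝓝 (D T) := by
      intro T
      have hstrict : HasStrictFDerivAt D (fderiv ℝ D T) T := hD.hasStrictFDerivAt one_ne_zero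
      have hinj' : Function.Injective (fderiv ℝ D T) := by
        intro B B' hBB
        by_contra hne
        have h2 : fderiv ℝ D T (B - B') = 0 := by rw [map_sub, hBB, sub_self]
        have := hmon T (B - B')
        rw [h2] at this
        simp only [inner_zero_left] at this
        have h1 : 0 < h ‖T‖ := hpos _ (norm_nonneg _)
        have h3 : (0:ℝ) < ‖B - B'‖ ^ 2 :=
          pow_pos (norm_pos_iff.mpr (sub_ne_zero.mpr hne)) 2
        nlinarith
      have hsurj : LinearMap.range (fderiv ℝ D T : Mat d N →ₗ[ℝ] Mat d N) = ⊤ := by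
        rw [LinearMap.range_eq_top]
        exact LinearMap.injective_iff_surjective.mp hinj'
      exact hstrict.map_nhds_eq_of_surj hsurj
    rw [isOpen_iff_mem_nhds]
    rintro B ⟨T, rfl⟩
    rw [← hopen' T, Filter.mem_map]
    simp
  have hnhds : (Metric.ball B₀ (min c₁ (ε * c₁)) ∩ Set.range D) ∈ 𝓝 B₀ := by
    apply Filter.inter_mem
    · exact Metric.ball_mem_nhds _ (lt_min hc₁pos (by positivity))
    · exact hopen.mem_nhds ⟨T₀, rfl⟩
  filter_upwards [hnhds] with B hB
  obtain ⟨hball, S, rfl⟩ := hB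
  rw [Metric.mem_ball, dist_eq_norm] at hball
  have hball1 : ‖D S - B₀‖ < c₁ := lt_of_lt_of_le hball (min_le_left _ _)
  have hball2 : ‖D S - B₀‖ < ε * c₁ := lt_of_lt_of_le hball (min_le_right _ _)
  have hST : ‖S - T₀‖ ≤ ‖D S - B₀‖ / c₁ := hkey S hball1
  -- the two values of the conjugate
  have hv1 : conjR d N D (D S) = (inner ℝ (D S) S : ℝ) - pot d N D S :=
    conjR_eq hD hsymm hpos hanti hmon S
  have hv0 : conjR d N D B₀ = (inner ℝ B₀ T₀ : ℝ) - pot d N D T₀ :=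
    conjR_eq hD hsymm hpos hanti hmon T₀
  -- lower bound
  have hlow : (0:ℝ) ≤ conjR d N D (D S) - conjR d N D B₀ - inner ℝ T₀ (D S - B₀) := by
    have hge := conjR_ge hD hsymm hpos hanti hmon S T₀
    rw [hv0]
    have hinner : (inner ℝ T₀ (D S - B₀) : ℝ) = (inner ℝ (D S) T₀ : ℝ) - (inner ℝ B₀ T₀ : ℝ) := by
      rw [real_inner_comm, inner_sub_left]
    rw [hinner]
    linarith
  -- upper bound
  have hup : conjR d N D (D S) - conjR d N D B₀ - inner ℝ T₀ (D S - B₀)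
      ≤ ‖D S - B₀‖ * ‖S - T₀‖ := by
    rw [hv1, hv0]
    have hinner : (inner ℝ T₀ (D S - B₀) : ℝ) = (inner ℝ (D S) T₀ : ℝ) - (inner ℝ B₀ T₀ : ℝ) := by
      rw [real_inner_comm, inner_sub_left]
    rw [hinner]
    have hgi := pot_grad_ineq hD hsymm hpos hanti hmon T₀ S
    rw [inner_sub_right, ← hB₀] at hgi
    have hcs : (inner ℝ (D S - B₀) (S - T₀) : ℝ) ≤ ‖D S - B₀‖ * ‖S - T₀‖ :=
      real_inner_le_norm _ _
    have hexp : (inner ℝ (D S) S : ℝ) - (inner ℝ (D S) T₀ : ℝ)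
          - ((inner ℝ B₀ S : ℝ) - (inner ℝ B₀ T₀ : ℝ))
        = (inner ℝ (D S - B₀) (S - T₀) : ℝ) := by
      rw [inner_sub_left, inner_sub_right, inner_sub_right]
      try ring
    linarith [hgi, hcs, hexp.le, hexp.ge]
  -- combine
  have hfinal : ‖conjR d N D (D S) - conjR d N D B₀ - inner ℝ T₀ (D S - B₀)‖
      ≤ ε * ‖D S - B₀‖ := by
    rw [Real.norm_eq_abs, abs_of_nonneg hlow]
    calc conjR d N D (D S) - conjR d N D B₀ - inner ℝ T₀ (D S - B₀)
        ≤ ‖D S - B₀‖ * ‖S - T₀‖ := hup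
      _ ≤ ‖D S - B₀‖ * (‖D S - B₀‖ / c₁) := by
          apply mul_le_mul_of_nonneg_left hST (norm_nonneg _)
      _ ≤ ε * ‖D S - B₀‖ := by
          rw [div_eq_mul_inv]
          have h1 : ‖D S - B₀‖ ≤ ε * c₁ := le_of_lt hball2
          have h2 : (0:ℝ) ≤ ‖D S - B₀‖ := norm_nonneg _
          have h3 : (0:ℝ) < c₁⁻¹ := inv_pos.mpr hc₁pos
          have h4 : c₁ * c₁⁻¹ = 1 := mul_inv_cancel₀ (ne_of_gt hc₁pos)
          calc ‖D S - B₀‖ * (‖D S - B₀‖ * c₁⁻¹)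
              ≤ (ε * c₁) * (‖D S - B₀‖ * c₁⁻¹) :=
                mul_le_mul_of_nonneg_right h1 (by positivity)
            _ = ε * ‖D S - B₀‖ * (c₁ * c₁⁻¹) := by ring
            _ = ε * ‖D S - B₀‖ := by rw [h4, mul_one]
  simpa using hfinal
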